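/- Let R be a commutative ℚ-algebra and A ∈ DG⁺CAlg(R). For each n, the n-fold composite σ⁰ ∘ σ⁰ ∘ … ∘ σ⁰ : DⁿA → A⁰ is a surjective R-algebra homomorphism whose kernel is n-nilpotent (its (n+1)-st power is zero). Consequently these maps assemble into a morphism DA → A⁰ of cosimplicial R-algebras (with constant cosimplicial structure on A⁰) which is a nilpotent extension in every cosimplicial level. -/

import Mathlib

open CategoryTheory

universe u

/-- A commutative differential graded algebra over `R` concentrated in non-negative
cochain degrees: a (not-necessarily-commutative) `R`-algebra with an `ℕ`-grading making
it a graded ring, which is graded-commutative (Koszul signs), together with a square-zero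
`R`-linear derivation `d` of cochain degree `+1`.  This is an object of `DG⁺CAlg(R)`. -/
structure DGCAlg (R : Type u) [CommRing R] : Type (u + 1) where
  carrier : Type u
  [ring : Ring carrier]
  [algebra : Algebra R carrier]
  grading : ℕ → Submodule R carrier
  [graded : GradedRing grading]
  gcomm : ∀ (i j : ℕ) (a b : carrier), a ∈ grading i → b ∈ grading j →
    a * b = ((-1 : ℤ) ^ (i * j)) • (b * a)
  d : carrier →ₗ[R] carrier
  d_mem : ∀ (i : ℕ) (a : carrier), a ∈ grading i → d a ∈ grading (i + 1)
  d_d : ∀ a, d (d a) = 0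
  leibniz : ∀ (i : ℕ) (a b : carrier), a ∈ grading i →
    d (a * b) = d a * b + ((-1 : ℤ) ^ i) • (a * d b)

attribute [instance] DGCAlg.ring DGCAlg.algebra DGCAlg.graded

variable {R : Type u} [CommRing R]

/-- Morphisms of non-negatively graded CDGAs: `R`-algebra homomorphisms preserving the
grading and commuting with the differentials. -/
@[ext]
structure DGCAlg.Hom (A B : DGCAlg R) where
  toAlgHom : A.carrier →ₐ[R] B.carrier
  map_grading : ∀ (i : ℕ) (a : A.carrier), a ∈ A.grading i → toAlgHom a ∈ B.grading i
  map_d : ∀ a, toAlgHom (A.d a) = B.d (toAlgHom a)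

instance : Category (DGCAlg R) where
  Hom A B := DGCAlg.Hom A B
  id A := ⟨AlgHom.id R A.carrier, fun _ _ h => h, fun _ => rfl⟩
  comp f g := ⟨g.toAlgHom.comp f.toAlgHom,
    fun i a h => g.map_grading i _ (f.map_grading i a h),
    fun a => by simp [AlgHom.comp_apply, f.map_d, g.map_d]⟩
  id_comp f := by apply DGCAlg.Hom.ext; rfl
  comp_id f := by apply DGCAlg.Hom.ext; rfl
  assoc f g h := by apply DGCAlg.Hom.ext; rfl

namespace DGCAlg

/-- A morphism of CDGAs is a square-zero extension if it is surjective in every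
(cochain) level and its kernel is a square-zero ideal. -/
def Hom.IsSquareZeroExtension {C' C : DGCAlg R} (p : DGCAlg.Hom C' C) : Prop :=
  (∀ i : ℕ, ∀ b ∈ C.grading i, ∃ a ∈ C'.grading i, p.toAlgHom a = b) ∧
    ∀ x y : C'.carrier, p.toAlgHom x = 0 → p.toAlgHom y = 0 → x * y = 0

/-- A square-zero extension is contractible if its kernel admits a `C'`-linear
contracting (cochain) homotopy. -/
def Hom.IsContractibleSquareZeroExtension {C' C : DGCAlg R} (p : DGCAlg.Hom C' C) : Prop :=
  p.IsSquareZeroExtension ∧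
    ∃ h : C'.carrier →ₗ[R] C'.carrier,
      (∀ x, p.toAlgHom x = 0 → p.toAlgHom (h x) = 0) ∧
      (∀ (i : ℕ) x, p.toAlgHom x = 0 → x ∈ C'.grading (i + 1) → h x ∈ C'.grading i) ∧
      (∀ x, p.toAlgHom x = 0 → x ∈ C'.grading 0 → h x = 0) ∧
      (∀ (i : ℕ) (a x : C'.carrier), a ∈ C'.grading i → p.toAlgHom x = 0 →
        h (a * x) = ((-1 : ℤ) ^ i) • (a * h x)) ∧
      (∀ x, p.toAlgHom x = 0 → C'.d (h x) + h (C'.d x) = x)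

end DGCAlg

/-- A natural transformation of set-valued functors on `DG⁺CAlg(R)` is formally étale if
it satisfies the (surjective) lifting condition against all square-zero extensions. -/
def FormallyEtaleNT {F G : DGCAlg R ⥤ Type u} (η : F ⟶ G) : Prop :=
  ∀ (C' C : DGCAlg R) (p : C' ⟶ C), DGCAlg.Hom.IsSquareZeroExtension p →
    ∀ (x : F.obj C) (y : G.obj C'), η.app C x = G.map p y →
      ∃ x' : F.obj C', F.map p x' = x ∧ η.app C' x' = y

/-- A natural transformation of set-valued functors on `DG⁺CAlg(R)` is formally geometric
if it satisfies the lifting condition against all contractible square-zero extensions. -/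
def FormallyGeometricNT {F G : DGCAlg R ⥤ Type u} (η : F ⟶ G) : Prop :=
  ∀ (C' C : DGCAlg R) (p : C' ⟶ C), DGCAlg.Hom.IsContractibleSquareZeroExtension p →
    ∀ (x : F.obj C) (y : G.obj C'), η.app C x = G.map p y →
      ∃ x' : F.obj C', F.map p x' = x ∧ η.app C' x' = y

/-- A natural transformation `η : F ⟶ G` of set-valued functors on `DG⁺CAlg(R)` is l.f.p.
if for every filtered colimit `C = colim_i C_i` the natural comparison map
`colim_i F(C_i) → colim_i G(C_i) ×_{G(C)} F(C)` is a bijection. -/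
def LFPNT {F G : DGCAlg R ⥤ Type u} (η : F ⟶ G) : Prop :=
  ∀ (I : Type u) (_ : SmallCategory I) (_ : IsFiltered I) (K : I ⥤ DGCAlg R)
    (c : Limits.Cocone K) (_ : Limits.IsColimit c),
    (∀ x y : Limits.colimit (K ⋙ F),
      Limits.colimMap (Functor.whiskerLeft K η) x = Limits.colimMap (Functor.whiskerLeft K η) y →
      Limits.colimit.desc (K ⋙ F) (F.mapCocone c) x =
        Limits.colimit.desc (K ⋙ F) (F.mapCocone c) y → x = y) ∧
    ∀ (yc : Limits.colimit (K ⋙ G)) (xF : F.obj c.pt),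
      Limits.colimit.desc (K ⋙ G) (G.mapCocone c) yc = η.app c.pt xF →
        ∃ x : Limits.colimit (K ⋙ F),
          Limits.colimMap (Functor.whiskerLeft K η) x = yc ∧
          Limits.colimit.desc (K ⋙ F) (F.mapCocone c) x = xF

/-- Étale natural transformations: formally étale and l.f.p. -/
def EtaleNT {F G : DGCAlg R ⥤ Type u} (η : F ⟶ G) : Prop :=
  FormallyEtaleNT η ∧ LFPNT η

/-- Geometric natural transformations: formally geometric and l.f.p. -/
def GeometricNT {F G : DGCAlg R ⥤ Type u} (η : F ⟶ G) : Prop :=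
  FormallyGeometricNT η ∧ LFPNT η

/-- The set-valued functor `Spec A` on `DG⁺CAlg(R)` represented by `A`. -/
def DGCAlg.Spec (A : DGCAlg R) : DGCAlg R ⥤ Type u := coyoneda.obj (Opposite.op A)

/-- The map `Spec B ⟶ Spec A` induced by a CDGA morphism `f : A ⟶ B`. -/
def DGCAlg.specMap {A B : DGCAlg R} (f : A ⟶ B) : B.Spec ⟶ A.Spec :=
  coyoneda.map f.op

/-- The unique natural transformation to the terminal (constant singleton) functor. -/
def toTerminalNT (F : DGCAlg R ⥤ Type u) : F ⟶ (Functor.const (DGCAlg R)).obj PUnit where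
  app _ := TypeCat.ofHom fun _ => PUnit.unit

/-- `Spec A` is a stacky affine if the map to the point is geometric. -/
def DGCAlg.IsStackyAffine (A : DGCAlg R) : Prop :=
  GeometricNT (toTerminalNT A.Spec)

/-- A morphism of CDGAs is étale if the induced map on `Spec` functors is étale. -/
def DGCAlg.Hom.IsEtale {A B : DGCAlg R} (f : A ⟶ B) : Prop := EtaleNT (DGCAlg.specMap f)

/-- A morphism of CDGAs is geometric if the induced map on `Spec` functors is geometric. -/
def DGCAlg.Hom.IsGeometric {A B : DGCAlg R} (f : A ⟶ B) : Prop :=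
  GeometricNT (DGCAlg.specMap f)

/-- The degree-zero part of a CDGA, as a commutative ring. -/
instance DGCAlg.commRingGradeZero (A : DGCAlg R) : CommRing (A.grading 0) :=
  { (inferInstance : Ring (A.grading 0)) with
    mul_comm := fun a b => Subtype.ext <| by
      have := A.gcomm 0 0 a.1 b.1 a.2 b.2
      simpa using this }

/-! ### Dold–Kan denormalisation and the Eilenberg–Zilber shuffle product -/

section Denorm

variable (A : DGCAlg R)

/-- The underlying `R`-module of the `n`-th level `DⁿA` of the denormalisation of `A`:
`DⁿA = ⊕_{J ⊆ {1,…,n}} ∂^J A^{n-|J|}`, encoded as functions on subsets `J` of `Fin n`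
(the subset `J` encodes the coface operators `∂^{j+1}` for `j ∈ J`). -/
def DObj (n : ℕ) : Type u := ∀ J : Finset (Fin n), A.grading (n - J.card)

instance (n : ℕ) : AddCommGroup (DObj A n) :=
  inferInstanceAs (AddCommGroup (∀ J : Finset (Fin n), A.grading (n - J.card)))
instance (n : ℕ) : Module R (DObj A n) :=
  inferInstanceAs (Module R (∀ J : Finset (Fin n), A.grading (n - J.card)))

/-- The basis inclusion of the summand `∂^J A^{n-|J|}` of `DⁿA`. -/
def DObj.single {n : ℕ} (J : Finset (Fin n)) (a : A.grading (n - J.card)) : DObj A n :=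
  Pi.single J a

variable {A}

/-- The sign `(-1)^{(S,T)}` of the shuffle permutation of `S ⊔ T` sending the first `|S|`
elements to `S` in order and the remaining `|T|` elements to `T` in order: `(-1)` to the
number of pairs `(s,t) ∈ S × T` with `t < s`. -/
def shuffleSign {n : ℕ} (S T : Finset (Fin n)) : ℤ :=
  (-1 : ℤ) ^ ((S ×ˢ T).filter (fun p => p.2 < p.1)).card

lemma grade_arith {n : ℕ} {I J : Finset (Fin n)} (h : I ∪ J = Finset.univ) :
    (n - I.card) + (n - J.card) = n - (I ∩ J).card := by
  have h1 : I.card ≤ n := by simpa using Finset.card_le_univ I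
  have h2 : J.card ≤ n := by simpa using Finset.card_le_univ J
  have h4 : (I ∩ J).card ≤ J.card := Finset.card_le_card Finset.inter_subset_right
  have h3 : n + (I ∩ J).card = I.card + J.card := by
    have := Finset.card_union_add_card_inter I J
    rw [h] at this
    simpa using this
  omega

lemma mul_mem_grade {n : ℕ} {I J : Finset (Fin n)} (h : I ∪ J = Finset.univ)
    {a b : A.carrier} (ha : a ∈ A.grading (n - I.card)) (hb : b ∈ A.grading (n - J.card)) :
    a * b ∈ A.grading (n - (I ∩ J).card) :=
  grade_arith h ▸ SetLike.GradedMul.mul_mem ha hb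

/-- The set `{j} ∪ δ_j(J)`, describing the effect of the coface operator `∂^{j+1}` on the
basis summand indexed by `J`. -/
def insertFace {n : ℕ} (j : Fin (n + 1)) (J : Finset (Fin n)) : Finset (Fin (n + 1)) :=
  insert j (J.image j.succAbove)

lemma insertFace_card {n : ℕ} (j : Fin (n + 1)) (J : Finset (Fin n)) :
    (insertFace j J).card = J.card + 1 := by
  have hj : j ∉ J.image j.succAbove := by
    simp only [Finset.mem_image]
    rintro ⟨a, -, ha⟩
    exact Fin.succAbove_ne j a ha
  rw [insertFace, Finset.card_insert_of_notMem hj,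
    Finset.card_image_of_injective _ Fin.succAbove_right_injective]

lemma insertFace_grade {n : ℕ} (j : Fin (n + 1)) (J : Finset (Fin n)) {v : A.carrier}
    (hv : v ∈ A.grading (n - J.card)) :
    v ∈ A.grading ((n + 1) - (insertFace j J).card) := by
  rwa [insertFace_card, Nat.succ_sub_succ]

variable (A)

/-- The structure of a cosimplicial commutative `R`-algebra on the Dold–Kan
denormalisation `n ↦ DⁿA` of `A ∈ DG⁺CAlg(R)`:
* a commutative `R`-algebra structure on each `DⁿA`, whose multiplication is given on
  the canonical basis by the Eilenberg–Zilber shuffle-product formula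
  `(∂^I a) ∇ (∂^J b) = ∂^{I∩J} (-1)^{(J∖I, I∖J)} (a·b)` if `I ∪ J = {1,…,n}`
  (equivalently `|a| = |J∖I|` and `|b| = |I∖J|`), and `0` otherwise;
* a functorial cosimplicial structure, all of whose operators are `R`-algebra
  homomorphisms, determined by the requirements that `σⁱ v = 0` for `v ∈ Aⁿ ⊆ DⁿA`,
  that `∂⁰ v = ∂v - Σ_{i=1}^{n+1} (-1)ⁱ ∂ⁱ v` for `v ∈ Aⁿ ⊆ DⁿA` (stated below as
  `Σ_{i=0}^{n+1} (-1)ⁱ ∂ⁱ v = ∂v`), and that the coface operators with positive index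
  act on the basis in the canonical way. -/
structure DenormalisationData : Type u where
  mul : ∀ n, DObj A n → DObj A n → DObj A n
  one : ∀ n, DObj A n
  mul_comm' : ∀ n x y, mul n x y = mul n y x
  mul_assoc' : ∀ n x y z, mul n (mul n x y) z = mul n x (mul n y z)
  one_mul' : ∀ n x, mul n (one n) x = x
  mul_add' : ∀ n x y z, mul n x (y + z) = mul n x y + mul n x z
  mul_smul' : ∀ n (r : R) x y, mul n x (r • y) = r • mul n x y
  one_def : ∀ n, one n = DObj.single A Finset.univ
    ⟨1, by simpa using SetLike.one_mem_graded A.grading⟩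
  mul_single : ∀ (n : ℕ) (I J : Finset (Fin n)) (a : A.grading (n - I.card))
    (b : A.grading (n - J.card)),
    mul n (DObj.single A I a) (DObj.single A J b) =
      if h : I ∪ J = Finset.univ then
        shuffleSign (J \ I) (I \ J) •
          DObj.single A (I ∩ J) ⟨(a : A.carrier) * b, mul_mem_grade h a.2 b.2⟩
      else 0
  map : ∀ {m n : SimplexCategory}, (m ⟶ n) → (DObj A m.len →ₗ[R] DObj A n.len)
  map_id : ∀ m : SimplexCategory, map (𝟙 m) = LinearMap.id
  map_comp : ∀ {m n k : SimplexCategory} (f : m ⟶ n) (g : n ⟶ k),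
    map (f ≫ g) = (map g).comp (map f)
  map_mul : ∀ {m n : SimplexCategory} (f : m ⟶ n) (x y : DObj A m.len),
    map f (mul m.len x y) = mul n.len (map f x) (map f y)
  map_one : ∀ {m n : SimplexCategory} (f : m ⟶ n), map f (one m.len) = one n.len
  σ_incl : ∀ (n : ℕ) (i : Fin (n + 1)) (v : A.grading (n + 1)),
    map (SimplexCategory.σ i) (DObj.single A (∅ : Finset (Fin (n + 1))) v) = 0
  δ_incl : ∀ (n : ℕ) (j : Fin (n + 2)) (hj : j ≠ 0) (J : Finset (Fin n))
    (v : A.grading (n - J.card)),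
    map (SimplexCategory.δ j) (DObj.single A J v) =
      DObj.single A (insertFace (j.pred hj) J) ⟨v, insertFace_grade _ J v.2⟩
  δ_alternating : ∀ (n : ℕ) (v : A.grading n),
    ∑ i : Fin (n + 2), ((-1 : ℤ) ^ (i : ℕ)) •
        map (SimplexCategory.δ i) (DObj.single A (∅ : Finset (Fin n)) v) =
      DObj.single A (∅ : Finset (Fin (n + 1))) ⟨A.d v, A.d_mem n v v.2⟩

end Denorm

/-- The `n`-fold composite `σ⁰ ∘ σ⁰ ∘ ⋯ ∘ σ⁰ : DⁿA → D⁰A`. -/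
def sigmaZeroComp {R : Type u} [CommRing R] {A : DGCAlg R}
    (D : DenormalisationData A) : ∀ n : ℕ, DObj A n →ₗ[R] DObj A 0
  | 0 => LinearMap.id
  | n + 1 => (sigmaZeroComp D n).comp (D.map (SimplexCategory.σ (0 : Fin (n + 1))))

/-- The `n`-fold composite `σ⁰ ∘ ⋯ ∘ σ⁰ : DⁿA → A⁰`, identifying `D⁰A` with `A⁰`. -/
def toZero {R : Type u} [CommRing R] {A : DGCAlg R} (D : DenormalisationData A)
    (n : ℕ) : DObj A n →ₗ[R] A.grading 0 :=
  (LinearMap.proj (∅ : Finset (Fin 0))).comp (sigmaZeroComp D n)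

section Lemmas
variable {R : Type u} [CommRing R] {A : DGCAlg R} (D : DenormalisationData A)

lemma hom_to_zero_unique {m : SimplexCategory} (f g : m ⟶ SimplexCategory.mk 0) : f = g := by
  rw [SimplexCategory.eq_const_to_zero f, SimplexCategory.eq_const_to_zero g]

lemma sigmaZeroComp_eq (n : ℕ) :
    sigmaZeroComp D n = D.map (SimplexCategory.const (SimplexCategory.mk n) (SimplexCategory.mk 0) 0) := by
  induction n with
  | zero =>
      rw [hom_to_zero_unique (SimplexCategory.const (SimplexCategory.mk 0) (SimplexCategory.mk 0) 0)
        (𝟙 (SimplexCategory.mk 0)), D.map_id]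
      rfl
  | succ n ih =>
      show (sigmaZeroComp D n).comp (D.map (SimplexCategory.σ (0 : Fin (n + 1)))) = _
      rw [ih, ← D.map_comp]
      exact congrArg D.map (hom_to_zero_unique _ _)

lemma sigmaZeroComp_map {m n : ℕ} (f : SimplexCategory.mk m ⟶ SimplexCategory.mk n) (x : DObj A m) :
    sigmaZeroComp D n (D.map f x) = sigmaZeroComp D m x := by
  rw [sigmaZeroComp_eq, sigmaZeroComp_eq]
  have h : D.map (f ≫ (SimplexCategory.mk n).const (SimplexCategory.mk 0) 0) x
      = (D.map ((SimplexCategory.mk n).const (SimplexCategory.mk 0) 0)) ((D.map f) x) := by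
    rw [D.map_comp]; rfl
  exact h.symm.trans (congrArg (fun (g : SimplexCategory.mk m ⟶ SimplexCategory.mk 0) => D.map g x) (hom_to_zero_unique _
    ((SimplexCategory.mk m).const (SimplexCategory.mk 0) 0)))

lemma toZero_map {m n : ℕ} (f : SimplexCategory.mk m ⟶ SimplexCategory.mk n) (x : DObj A m) :
    toZero D n (D.map f x) = toZero D m x := by
  show (LinearMap.proj (R := R) (∅ : Finset (Fin 0))) (sigmaZeroComp D n (D.map f x)) =
    (LinearMap.proj (R := R) (∅ : Finset (Fin 0))) (sigmaZeroComp D m x)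
  rw [sigmaZeroComp_map]


lemma toZero_single_empty_zero (v : A.grading ((0:ℕ) - (∅ : Finset (Fin 0)).card)) :
    (toZero D 0 (DObj.single A ∅ v) : A.carrier) = v := by
  show ((DObj.single A (∅ : Finset (Fin 0)) v ∅ : A.grading _) : A.carrier) = v
  rw [DObj.single, Pi.single_eq_same]

lemma toZero_single_empty_pos (k : ℕ) (v : A.grading ((k+1) - (∅ : Finset (Fin (k+1))).card)) :
    toZero D (k+1) (DObj.single A ∅ v) = 0 := by
  show toZero D k (D.map (SimplexCategory.σ (0 : Fin (k+1))) (DObj.single A ∅ v)) = 0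
  rw [D.σ_incl k 0 v]
  exact map_zero _

lemma single_congr {n : ℕ} {J₁ J₂ : Finset (Fin n)} (h : J₁ = J₂) (v : A.carrier)
    (h₁ : v ∈ A.grading (n - J₁.card)) (h₂ : v ∈ A.grading (n - J₂.card)) :
    DObj.single A J₁ ⟨v, h₁⟩ = DObj.single A J₂ ⟨v, h₂⟩ := by subst h; rfl

lemma exists_insertFace {n : ℕ} {J : Finset (Fin (n+1))} (hJ : J.Nonempty) :
    ∃ (j : Fin (n+1)) (J' : Finset (Fin n)), insertFace j J' = J ∧ J'.card + 1 = J.card := by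
  obtain ⟨j, hj⟩ := hJ
  have hEq : insertFace j ((J.erase j).preimage j.succAbove
      (Fin.succAbove_right_injective.injOn)) = J := by
    ext a
    simp only [insertFace, Finset.mem_insert, Finset.mem_image, Finset.mem_preimage,
      Finset.mem_erase]
    constructor
    · rintro (rfl | ⟨b, ⟨-, hb⟩, rfl⟩)
      · exact hj
      · exact hb
    · intro ha
      by_cases h : a = j
      · exact Or.inl h
      · obtain ⟨b, hb⟩ := Fin.exists_succAbove_eq h
        exact Or.inr ⟨b, ⟨by rw [hb]; exact ⟨h, ha⟩, hb⟩⟩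
  exact ⟨j, _, hEq, (insertFace_card j _).symm.trans (congrArg Finset.card hEq)⟩

lemma exists_face_word (n : ℕ) :
    ∀ (m : ℕ) (J : Finset (Fin n)), J.card + m = n → ∀ (v : A.carrier) (hv : v ∈ A.grading m)
      (h₁ : v ∈ A.grading (m - (∅ : Finset (Fin m)).card)) (h₂ : v ∈ A.grading (n - J.card)),
    ∃ g : SimplexCategory.mk m ⟶ SimplexCategory.mk n,
      D.map g (DObj.single A (∅ : Finset (Fin m)) ⟨v, h₁⟩) = DObj.single A J ⟨v, h₂⟩ := by
  induction n with
  | zero =>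
      intro m J hm v hv h₁ h₂
      have hJ : J = ∅ := Finset.eq_empty_of_isEmpty J
      subst hJ
      simp only [Finset.card_empty, Nat.zero_add] at hm
      subst hm
      exact ⟨𝟙 _, by rw [D.map_id]; rfl⟩
  | succ n ih =>
      intro m J hm v hv h₁ h₂
      rcases J.eq_empty_or_nonempty with rfl | hne
      · simp only [Finset.card_empty, Nat.zero_add] at hm
        subst hm
        exact ⟨𝟙 _, by rw [D.map_id]; rfl⟩
      · obtain ⟨j, J', hJ', hcard⟩ := exists_insertFace hne
        have hm' : J'.card + m = n := by omega
        have h₂' : v ∈ A.grading (n - J'.card) := by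
          rwa [show n - J'.card = m by omega]
        obtain ⟨g', hg'⟩ := ih m J' hm' v hv h₁ h₂'
        refine ⟨g' ≫ SimplexCategory.δ j.succ, ?_⟩
        have hc : D.map (g' ≫ SimplexCategory.δ j.succ) (DObj.single A (∅ : Finset (Fin m)) ⟨v, h₁⟩)
            = D.map (SimplexCategory.δ j.succ) (DObj.single A J' ⟨v, h₂'⟩) := by
          rw [D.map_comp]
          exact congrArg (D.map (SimplexCategory.δ j.succ)) hg'
        rw [hc, D.δ_incl n j.succ (Fin.succ_ne_zero j) J' ⟨v, h₂'⟩]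
        have hpred : (j.succ).pred (Fin.succ_ne_zero j) = j := by simp
        rw [hpred]
        exact single_congr hJ' v _ h₂


lemma toZero_single_empty (m : ℕ) (v : A.grading (m - (∅ : Finset (Fin m)).card)) :
    (toZero D m (DObj.single A ∅ v) : A.carrier) = if m = 0 then (v : A.carrier) else 0 := by
  cases m with
  | zero => rw [if_pos rfl]; exact toZero_single_empty_zero D v
  | succ k => rw [if_neg (Nat.succ_ne_zero k), toZero_single_empty_pos D k v]; rfl

lemma toZero_single {n : ℕ} (J : Finset (Fin n)) (v : A.grading (n - J.card)) :
    (toZero D n (DObj.single A J v) : A.carrier)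
      = if J = Finset.univ then (v : A.carrier) else 0 := by
  have hcard : J.card ≤ n := by simpa using Finset.card_le_univ J
  have h₁ : (v : A.carrier) ∈ A.grading ((n - J.card) - (∅ : Finset (Fin (n - J.card))).card) := by
    simpa using v.2
  obtain ⟨g, hg⟩ := exists_face_word D n (n - J.card) J (by omega) v v.2 h₁ v.2
  rw [show DObj.single A J v = DObj.single A J ⟨(v : A.carrier), v.2⟩ from rfl, ← hg,
    toZero_map, toZero_single_empty]
  by_cases hJ : J = Finset.univ
  · rw [if_pos ?_, if_pos hJ]
    subst hJ
    simp
  · rw [if_neg ?_, if_neg hJ]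
    have : J.card < n := by
      rcases lt_or_eq_of_le hcard with h | h
      · exact h
      · exact absurd (Finset.eq_univ_of_card J (by simpa using h)) hJ
    omega

lemma toZero_apply {n : ℕ} (x : DObj A n) :
    (toZero D n x : A.carrier) = (x Finset.univ : A.carrier) := by
  conv_lhs => rw [show x = ∑ J : Finset (Fin n), DObj.single A J (x J) from
    (Finset.univ_sum_single x).symm]
  rw [map_sum, AddSubmonoidClass.coe_finset_sum]
  rw [Finset.sum_congr rfl (fun J _ => toZero_single D J (x J))]
  rw [Finset.sum_ite_eq' Finset.univ Finset.univ (fun J => ((x J : A.carrier)))]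
  simp


lemma single_apply_coe {n : ℕ} (I K : Finset (Fin n)) (w : A.grading (n - I.card))
    (h : I = K) : ((DObj.single A I w K : A.grading (n - K.card)) : A.carrier) = w := by
  subst h; rw [DObj.single, Pi.single_eq_same]

lemma repr0 (a : DObj A 0) : a = DObj.single A ∅ (a ∅) := by
  funext J
  have hJ : J = ∅ := Finset.eq_empty_of_isEmpty J
  subst hJ
  rw [DObj.single, Pi.single_eq_same]

lemma hrepr {n : ℕ} (z : DObj A n) : z = ∑ I : Finset (Fin n), DObj.single A I (z I) :=
  (Finset.univ_sum_single z).symm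

lemma mul_zero_apply (a b : DObj A 0) :
    ((D.mul 0 a b ∅ : A.grading _) : A.carrier) = (a ∅ : A.carrier) * (b ∅ : A.carrier) := by
  conv_lhs => rw [repr0 a, repr0 b]
  rw [D.mul_single]
  rw [dif_pos (by simp : (∅ : Finset (Fin 0)) ∪ ∅ = Finset.univ)]
  have hsign : shuffleSign ((∅ : Finset (Fin 0)) \ ∅) (∅ \ ∅) = 1 := by simp [shuffleSign]
  rw [hsign, one_smul]
  exact single_apply_coe _ _ _ (by simp)

lemma mulD_zero (n : ℕ) (x : DObj A n) : D.mul n x 0 = 0 := by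
  have h := D.mul_smul' n 0 x 0
  simpa using h

lemma mulD_sum {n : ℕ} {ι : Type} (s : Finset ι) (f : ι → DObj A n) (x : DObj A n) :
    D.mul n x (∑ i ∈ s, f i) = ∑ i ∈ s, D.mul n x (f i) :=
  map_sum (AddMonoidHom.mk' (D.mul n x) (D.mul_add' n x)) f s

lemma mul_support {n j k : ℕ} {x y : DObj A n}
    (hx : ∀ J : Finset (Fin n), n < J.card + j → x J = 0)
    (hy : ∀ J : Finset (Fin n), n < J.card + k → y J = 0)
    (K : Finset (Fin n)) (hK : n < K.card + (j + k)) : D.mul n x y K = 0 := by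
  have expand : D.mul n x y = ∑ J : Finset (Fin n), ∑ I : Finset (Fin n),
      D.mul n (DObj.single A I (x I)) (DObj.single A J (y J)) := by
    conv_lhs => rw [hrepr x, hrepr y]
    rw [mulD_sum]
    refine Finset.sum_congr rfl fun J _ => ?_
    rw [D.mul_comm', mulD_sum]
    exact Finset.sum_congr rfl fun I _ => D.mul_comm' n _ _
  rw [expand]
  erw [Finset.sum_apply]
  refine Finset.sum_eq_zero fun J _ => ?_
  erw [Finset.sum_apply]
  refine Finset.sum_eq_zero fun I _ => ?_
  rw [D.mul_single]
  by_cases hu : I ∪ J = Finset.univ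
  · rw [dif_pos hu]
    by_cases hxI : n < I.card + j
    · have hx0 : x I = 0 := hx I hxI
      have hz : (⟨((x I : A.carrier)) * ((y J : A.carrier)),
          mul_mem_grade hu (x I).2 (y J).2⟩ : A.grading (n - (I ∩ J).card)) = 0 :=
        Subtype.ext (by rw [hx0]; simp)
      erw [hz, DObj.single, Pi.single_zero]; show ((_ : ℤ) • (0 : DObj A n)) K = 0; rw [smul_zero]; rfl
    · by_cases hyJ : n < J.card + k
      · have hy0 : y J = 0 := hy J hyJ
        have hz : (⟨((x I : A.carrier)) * ((y J : A.carrier)),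
            mul_mem_grade hu (x I).2 (y J).2⟩ : A.grading (n - (I ∩ J).card)) = 0 :=
          Subtype.ext (by rw [hy0]; simp)
        erw [hz, DObj.single, Pi.single_zero]; show ((_ : ℤ) • (0 : DObj A n)) K = 0; rw [smul_zero]; rfl
      · by_cases hKe : K = I ∩ J
        · exfalso
          have h1 := Finset.card_union_add_card_inter I J
          have h2 : (I ∪ J).card = n := by rw [hu]; simp
          rw [hKe] at hK
          omega
        · erw [Pi.smul_apply, DObj.single, Pi.single_eq_of_ne hKe, smul_zero]
  · erw [dif_neg hu, Pi.zero_apply]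


lemma toZero_coe_map0 {n : ℕ} (z : DObj A n) :
    (toZero D n z : A.carrier)
      = ((D.map ((SimplexCategory.mk n).const (SimplexCategory.mk 0) 0) z ∅ :
          A.grading ((0:ℕ) - (∅ : Finset (Fin 0)).card)) : A.carrier) := by
  have h := congrArg (fun (L : DObj A n →ₗ[R] DObj A 0)
      => ((L z ∅ : A.grading ((0:ℕ) - (∅ : Finset (Fin 0)).card)) : A.carrier))
    (sigmaZeroComp_eq D n)
  exact h

lemma toZero_mul (n : ℕ) (x y : DObj A n) :
    toZero D n (D.mul n x y) = toZero D n x * toZero D n y := by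
  apply Subtype.ext
  have hc : ((toZero D n x * toZero D n y : A.grading 0) : A.carrier)
      = (toZero D n x : A.carrier) * (toZero D n y : A.carrier) := rfl
  rw [hc, toZero_coe_map0, toZero_coe_map0, toZero_coe_map0]
  rw [show D.map ((SimplexCategory.mk n).const (SimplexCategory.mk 0) 0) (D.mul n x y)
      = D.mul 0 (D.map ((SimplexCategory.mk n).const (SimplexCategory.mk 0) 0) x)
          (D.map ((SimplexCategory.mk n).const (SimplexCategory.mk 0) 0) y) from
    D.map_mul (m := SimplexCategory.mk n) (n := SimplexCategory.mk 0) _ x y]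
  exact mul_zero_apply D _ _

lemma toZero_one (n : ℕ) : toZero D n (D.one n) = 1 := by
  apply Subtype.ext
  show (toZero D n (D.one n) : A.carrier) = ((1 : A.grading 0) : A.carrier)
  rw [toZero_apply, D.one_def]
  exact single_apply_coe _ _ _ rfl

lemma fold_support {n : ℕ} : ∀ (l : List (DObj A n)),
    (∀ x ∈ l, ∀ J : Finset (Fin n), n < J.card + 1 → x J = 0) →
    ∀ J : Finset (Fin n), n < J.card + l.length → (l.foldr (D.mul n) (D.one n)) J = 0 := by
  intro l
  induction l with
  | nil =>
      intro _ J hJ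
      exfalso
      have h := Finset.card_le_univ J
      simp only [Finset.card_univ, Fintype.card_fin, List.length_nil] at h hJ
      omega
  | cons a l ih =>
      intro h J hJ
      rw [List.length_cons] at hJ
      rw [List.foldr_cons]
      exact mul_support D (fun K hK => h a List.mem_cons_self K hK)
        (fun K hK => ih (fun x hx => h x (List.mem_cons_of_mem a hx)) K hK) J (by omega)

end Lemmas

/-- **(The map `DA → A⁰` is a levelwise nilpotent extension.)**
For `A ∈ DG⁺CAlg(R)` and each `n`, the `n`-fold composite
`σ⁰ ∘ ⋯ ∘ σ⁰ : DⁿA → A⁰` is a surjective `R`-algebra homomorphism whose kernel is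
`n`-nilpotent (any product of `n+1` of its elements vanishes).  Consequently these maps
assemble into a morphism `DA → A⁰` of cosimplicial `R`-algebras (constant cosimplicial
structure on `A⁰`) which is a nilpotent extension in every cosimplicial level. -/
theorem denormalisation_to_degree_zero_nilpotent_extension
    {R : Type u} [CommRing R] [Algebra ℚ R] (A : DGCAlg R)
    (D : DenormalisationData A) :
    (∀ (n : ℕ) (b : A.grading 0), ∃ x : DObj A n, toZero D n x = b) ∧
    (∀ (n : ℕ) (x y : DObj A n),
      toZero D n (D.mul n x y) = toZero D n x * toZero D n y) ∧
    (∀ n : ℕ, toZero D n (D.one n) = 1) ∧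
    (∀ (n : ℕ) (x : Fin (n + 1) → DObj A n), (∀ k, toZero D n (x k) = 0) →
      (List.ofFn x).foldr (D.mul n) (D.one n) = 0) ∧
    (∀ (m k : SimplexCategory) (f : m ⟶ k) (x : DObj A m.len),
      toZero D k.len (D.map f x) = toZero D m.len x) := by
  refine ⟨?_, toZero_mul D, toZero_one D, ?_, ?_⟩
  · intro n b
    refine ⟨DObj.single A Finset.univ ⟨(b : A.carrier), ?_⟩, ?_⟩
    · rw [show n - (Finset.univ : Finset (Fin n)).card = 0 by simp]
      exact b.2
    · apply Subtype.ext
      rw [toZero_apply]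
      exact single_apply_coe _ _ _ rfl
  · intro n x hx
    funext J
    show (List.foldr (D.mul n) (D.one n) (List.ofFn x)) J = (0 : DObj A n) J
    erw [Pi.zero_apply]
    apply fold_support
    · intro z hz K hK
      rw [List.mem_ofFn] at hz
      obtain ⟨k, rfl⟩ := hz
      have hK' : K = Finset.univ := Finset.eq_univ_of_card K (by
        have h := Finset.card_le_univ K
        simp only [Finset.card_univ, Fintype.card_fin] at h ⊢
        omega)
      subst hK'
      have h := congrArg Subtype.val (hx k)
      rw [toZero_apply] at h
      exact Subtype.ext h
    · rw [List.length_ofFn]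
      omega
  · intro m k f x
    exact toZero_map D (m := m.len) (n := k.len) f x
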